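/- Fix an integer t ≥ 4 and set B_r = C(t,2)·(r−1)(r−2)···(r−(t−2))/r^{t−1} for integers r ≥ t−2, and f = ⌈(t−2)(3t+1)/6⌉. Then B_{r−1} < B_r for every integer r with t−1 ≤ r ≤ f, and B_{r−1} > B_r for every integer r ≥ f+1. In particular B_f = max{B_r : r ≥ t−2}. -/

import Mathlib

/- ### Auxiliary lemmas -/

lemma consec4_nonneg (T : ℕ) : 0 ≤ (T:ℝ)*((T:ℝ)-1)*((T:ℝ)-2)*((T:ℝ)-3) := by
  rcases le_or_gt 3 T with h | h
  · have h3 : (3:ℝ) ≤ (T:ℝ) := by exact_mod_cast h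
    have h0' : (0:ℝ) ≤ (T:ℝ) := by positivity
    have := mul_nonneg (mul_nonneg (mul_nonneg h0' (by linarith : (0:ℝ) ≤ (T:ℝ)-1))
      (by linarith : (0:ℝ) ≤ (T:ℝ)-2)) (by linarith : (0:ℝ) ≤ (T:ℝ)-3)
    linarith
  · interval_cases T <;> norm_num

lemma consec5_nonneg (T : ℕ) : 0 ≤ (T:ℝ)*((T:ℝ)-1)*((T:ℝ)-2)*((T:ℝ)-3)*((T:ℝ)-4) := by
  rcases le_or_gt 4 T with h | h
  · have h4 : (4:ℝ) ≤ (T:ℝ) := by exact_mod_cast h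
    have h0' : (0:ℝ) ≤ (T:ℝ) := by positivity
    have := mul_nonneg (mul_nonneg (mul_nonneg (mul_nonneg h0'
      (by linarith : (0:ℝ) ≤ (T:ℝ)-1)) (by linarith : (0:ℝ) ≤ (T:ℝ)-2))
      (by linarith : (0:ℝ) ≤ (T:ℝ)-3)) (by linarith : (0:ℝ) ≤ (T:ℝ)-4)
    linarith
  · interval_cases T <;> norm_num

/-- Truncated alternating binomial series: even truncation is an upper bound. -/
lemma upper4 (T : ℕ) (y : ℝ) (h0 : 0 ≤ y) (h1 : y ≤ 1) :
    (1 - y) ^ T ≤ 1 - (T:ℝ)*y + (T:ℝ)*((T:ℝ)-1)/2*y^2 - (T:ℝ)*((T:ℝ)-1)*((T:ℝ)-2)/6*y^3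
      + (T:ℝ)*((T:ℝ)-1)*((T:ℝ)-2)*((T:ℝ)-3)/24*y^4 := by
  induction T with
  | zero => norm_num
  | succ T ih =>
    have hc4 := consec4_nonneg T
    have hy : 0 ≤ 1 - y := by linarith
    have step : (1 - y) ^ (T+1) ≤ (1 - ((T:ℝ))*y + (T:ℝ)*((T:ℝ)-1)/2*y^2
        - (T:ℝ)*((T:ℝ)-1)*((T:ℝ)-2)/6*y^3
        + (T:ℝ)*((T:ℝ)-1)*((T:ℝ)-2)*((T:ℝ)-3)/24*y^4) * (1 - y) := by
      rw [pow_succ]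
      exact mul_le_mul_of_nonneg_right ih hy
    push_cast
    nlinarith [mul_nonneg hc4 (pow_nonneg h0 5), step]

/-- Truncated alternating binomial series: odd truncation is a lower bound. -/
lemma lower5 (T : ℕ) (y : ℝ) (h0 : 0 ≤ y) (h1 : y ≤ 1) :
    1 - (T:ℝ)*y + (T:ℝ)*((T:ℝ)-1)/2*y^2 - (T:ℝ)*((T:ℝ)-1)*((T:ℝ)-2)/6*y^3
      + (T:ℝ)*((T:ℝ)-1)*((T:ℝ)-2)*((T:ℝ)-3)/24*y^4
      - (T:ℝ)*((T:ℝ)-1)*((T:ℝ)-2)*((T:ℝ)-3)*((T:ℝ)-4)/120*y^5 ≤ (1 - y) ^ T := by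
  induction T with
  | zero => norm_num
  | succ T ih =>
    have hc5 := consec5_nonneg T
    have hy : 0 ≤ 1 - y := by linarith
    have step : (1 - ((T:ℝ))*y + (T:ℝ)*((T:ℝ)-1)/2*y^2
        - (T:ℝ)*((T:ℝ)-1)*((T:ℝ)-2)/6*y^3
        + (T:ℝ)*((T:ℝ)-1)*((T:ℝ)-2)*((T:ℝ)-3)/24*y^4
        - (T:ℝ)*((T:ℝ)-1)*((T:ℝ)-2)*((T:ℝ)-3)*((T:ℝ)-4)/120*y^5) * (1 - y)
        ≤ (1 - y) ^ (T+1) := by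
      rw [pow_succ]
      exact mul_le_mul_of_nonneg_right ih hy
    push_cast
    nlinarith [mul_nonneg hc5 (pow_nonneg h0 6), step]

lemma realINC (m : ℕ) (r : ℝ) (hr : (m:ℝ) + 4 ≤ r)
    (hub : 6*r ≤ 3*(m:ℝ)^2 + 19*(m:ℝ) + 31) :
    (r - ((m:ℝ)+3)) * r^(m+3) < (r-1)^(m+4) := by
  have hn : (0:ℝ) ≤ (m:ℝ) := Nat.cast_nonneg m
  have hr0 : (0:ℝ) < r := by linarith
  set y : ℝ := 1/r with hy'
  have hy0 : 0 ≤ y := by positivity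
  have hy1 : y ≤ 1 := by rw [hy', div_le_one hr0]; linarith
  have L := lower5 (m+4) y hy0 hy1
  push_cast at L
  set n : ℝ := (m:ℝ) with hn'
  set L5 : ℝ := 1 - (n + 4) * y + (n + 4) * (n + 4 - 1) / 2 * y ^ 2 -
      (n + 4) * (n + 4 - 1) * (n + 4 - 2) / 6 * y ^ 3 +
      (n + 4) * (n + 4 - 1) * (n + 4 - 2) * (n + 4 - 3) / 24 * y ^ 4 -
      (n + 4) * (n + 4 - 1) * (n + 4 - 2) * (n + 4 - 3) * (n + 4 - 4) / 120 * y ^ 5 with hL5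
  have cert : r^4 + (n+4)*(n+3)*(n+2)/6 * r^2 + (n+4)*(n+3)*(n+2)*(n+1)*n/120
      < (n+4)*(n+3)/2 * r^3 + (n+4)*(n+3)*(n+2)*(n+1)/24 * r := by
    have hT1 : 0 ≤ (3*n^2 + 19*n + 31 - 6*r) * ((r - (n+4)) * (r^2 + (4*n+19)/6*r + (25*n^2+209*n+445)/36)) := by
      have f3 : (0:ℝ) ≤ r^2 + (4*n+19)/6*r + (25*n^2+209*n+445)/36 := by positivity
      exact mul_nonneg (by linarith) (mul_nonneg (by linarith) f3)
    have hT2 : 0 ≤ (3*n^2 + 19*n + 31 - 6*r) * (10123/216 + 583/18*n + 253/36*n^2 + 19/54*n^3) :=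
      mul_nonneg (by linarith) (by positivity)
    have hT3 : 0 ≤ (r - (n+4)) * n^4 := mul_nonneg (by linarith) (by positivity)
    nlinarith [hT1, hT2, hT3, pow_nonneg hn 2, pow_nonneg hn 3, pow_nonneg hn 4, pow_nonneg hn 5]
  have key : r^4 * (r * L5 - (r - (n+3))) =
      ((n+4)*(n+3)/2 * r^3 + (n+4)*(n+3)*(n+2)*(n+1)/24 * r)
      - (r^4 + (n+4)*(n+3)*(n+2)/6 * r^2 + (n+4)*(n+3)*(n+2)*(n+1)*n/120) := by
    rw [hL5, hy']
    field_simp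
    ring
  have step1 : r - (n+3) < r * L5 := by
    by_contra hcon
    push_neg at hcon
    have h1 : r^4 * (r * L5 - (r - (n+3))) ≤ 0 :=
      mul_nonpos_of_nonneg_of_nonpos (by positivity) (by linarith)
    rw [key] at h1
    linarith
  have hinv : r * (1 - y) = r - 1 := by rw [hy']; field_simp
  have step2 : r^(m+4) * L5 ≤ (r-1)^(m+4) :=
    calc r^(m+4) * L5 ≤ r^(m+4) * (1-y)^(m+4) :=
          mul_le_mul_of_nonneg_left L (by positivity)
      _ = (r * (1-y))^(m+4) := (mul_pow r (1-y) (m+4)).symm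
      _ = (r-1)^(m+4) := by rw [hinv]
  calc (r - (n+3)) * r^(m+3) < (r * L5) * r^(m+3) :=
        mul_lt_mul_of_pos_right step1 (by positivity)
    _ = r^(m+4) * L5 := by ring
    _ ≤ (r-1)^(m+4) := step2

lemma realDEC (m : ℕ) (r : ℝ) (hlb : 3*(m:ℝ)^2 + 19*(m:ℝ) + 32 ≤ 6*r) :
    (r-1)^(m+4) < (r - ((m:ℝ)+3)) * r^(m+3) := by
  have hn : (0:ℝ) ≤ (m:ℝ) := Nat.cast_nonneg m
  have hr0 : (0:ℝ) < r := by nlinarith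
  set y : ℝ := 1/r with hy'
  have hy0 : 0 ≤ y := by positivity
  have hy1 : y ≤ 1 := by rw [hy', div_le_one hr0]; nlinarith
  have U := upper4 (m+4) y hy0 hy1
  push_cast at U
  set n : ℝ := (m:ℝ) with hn'
  set U4 : ℝ := 1 - (n + 4) * y + (n + 4) * (n + 4 - 1) / 2 * y ^ 2 -
      (n + 4) * (n + 4 - 1) * (n + 4 - 2) / 6 * y ^ 3 +
      (n + 4) * (n + 4 - 1) * (n + 4 - 2) * (n + 4 - 3) / 24 * y ^ 4 with hU4
  have cert : (n+4)*(n+3)/2 * r^2 + (n+4)*(n+3)*(n+2)*(n+1)/24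
      < r^3 + (n+4)*(n+3)*(n+2)/6 * r := by
    have hT : 0 ≤ (6*r - (3*n^2 + 19*n + 32)) * ((2*r - (n+2)/3)^2 + 3*((n+2)/3)^2) :=
      mul_nonneg (by linarith) (by positivity)
    nlinarith [hT, pow_nonneg hn 2, pow_nonneg hn 3, pow_nonneg hn 4]
  have key : r^3 * ((r - (n+3)) - r * U4) =
      (r^3 + (n+4)*(n+3)*(n+2)/6 * r)
      - ((n+4)*(n+3)/2 * r^2 + (n+4)*(n+3)*(n+2)*(n+1)/24) := by
    rw [hU4, hy']
    field_simp
    ring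
  have step1 : r * U4 < r - (n+3) := by
    by_contra hcon
    push_neg at hcon
    have h1 : r^3 * ((r - (n+3)) - r * U4) ≤ 0 :=
      mul_nonpos_of_nonneg_of_nonpos (by positivity) (by linarith)
    rw [key] at h1
    linarith
  have hinv : r * (1 - y) = r - 1 := by rw [hy']; field_simp
  calc (r-1)^(m+4) = (r * (1-y))^(m+4) := by rw [hinv]
    _ = r^(m+4) * (1-y)^(m+4) := mul_pow r (1-y) (m+4)
    _ ≤ r^(m+4) * U4 := mul_le_mul_of_nonneg_left U (by positivity)
    _ = (r * U4) * r^(m+3) := by ring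
    _ < (r - (n+3)) * r^(m+3) := mul_lt_mul_of_pos_right step1 (by positivity)

/-- `B_r = C(t,2)·(r−1)(r−2)⋯(r−(t−2))/r^{t−1}`. -/
noncomputable def Bfun (t r : ℕ) : ℝ :=
  (t.choose 2 : ℝ) * (∏ i ∈ Finset.Icc 1 (t - 2), ((r : ℝ) - (i : ℝ))) / (r : ℝ) ^ (t - 1)

lemma prodshift (n : ℕ) (r : ℝ) :
    (∏ i ∈ Finset.Icc 1 n, ((r - 1) - (i:ℝ))) * (r - 1)
      = (∏ i ∈ Finset.Icc 1 n, (r - (i:ℝ))) * (r - ((n:ℝ)+1)) := by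
  induction n with
  | zero => simp
  | succ n ih =>
    rw [Finset.prod_Icc_succ_top (by omega : 1 ≤ n + 1),
        Finset.prod_Icc_succ_top (by omega : 1 ≤ n + 1)]
    push_cast
    linear_combination (r - ((n:ℝ) + 2)) * ih

lemma prodpos (n : ℕ) (r : ℝ) (h : (n:ℝ) < r) :
    0 < ∏ i ∈ Finset.Icc 1 n, (r - (i:ℝ)) := by
  apply Finset.prod_pos
  intro i hi
  rw [Finset.mem_Icc] at hi
  have : (i:ℝ) ≤ (n:ℝ) := by exact_mod_cast hi.2
  linarith

lemma Bcomp (m r : ℕ) (hr : m + 4 ≤ r) :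
    (Bfun (m+4) (r-1) < Bfun (m+4) r ↔
      ((r:ℝ) - ((m:ℝ)+3)) * (r:ℝ)^(m+3) < ((r:ℝ)-1)^(m+4)) := by
  have hR : ((m:ℝ) + 4) ≤ (r:ℝ) := by exact_mod_cast hr
  have hm : (0:ℝ) ≤ (m:ℝ) := Nat.cast_nonneg m
  have hcast : ((r - 1 : ℕ) : ℝ) = (r:ℝ) - 1 := by
    have : 1 ≤ r := by omega
    push_cast [this]; ring
  have h1 : Bfun (m+4) (r-1)
      = ((m+4).choose 2 : ℝ) * (∏ i ∈ Finset.Icc 1 (m+2), (((r:ℝ)-1) - (i:ℝ))) / ((r:ℝ)-1) ^ (m+3) := by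
    simp only [Bfun, hcast]
    rfl
  have h2 : Bfun (m+4) r
      = ((m+4).choose 2 : ℝ) * (∏ i ∈ Finset.Icc 1 (m+2), ((r:ℝ) - (i:ℝ))) / (r:ℝ) ^ (m+3) := by
    simp only [Bfun]
    rfl
  set c : ℝ := ((m+4).choose 2 : ℝ) with hc'
  have hc : 0 < c := by
    rw [hc']
    exact_mod_cast Nat.choose_pos (by omega : 2 ≤ m + 4)
  set P : ℝ := ∏ i ∈ Finset.Icc 1 (m+2), ((r:ℝ) - (i:ℝ)) with hP'
  set P1 : ℝ := ∏ i ∈ Finset.Icc 1 (m+2), (((r:ℝ)-1) - (i:ℝ)) with hP1'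
  have hP : 0 < P := by
    rw [hP']
    apply prodpos
    push_cast
    linarith
  have key : P1 * ((r:ℝ) - 1) = P * ((r:ℝ) - ((m:ℝ)+3)) := by
    rw [hP1', hP']
    have := prodshift (m+2) (r:ℝ)
    push_cast at this ⊢
    linarith [this]
  have hr1 : (0:ℝ) < (r:ℝ) - 1 := by linarith
  have hrpos : (0:ℝ) < (r:ℝ) := by linarith
  rw [h1, h2]
  rw [div_lt_div_iff₀ (by positivity) (by positivity)]
  constructor
  · intro h
    have h3 : c * P1 * ((r:ℝ)-1) * (r:ℝ)^(m+3) < c * P * ((r:ℝ)-1)^(m+3) * ((r:ℝ)-1) := by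
      nlinarith [h, hr1]
    have h4 : c * (P * ((r:ℝ) - ((m:ℝ)+3))) * (r:ℝ)^(m+3) < c * P * ((r:ℝ)-1)^(m+4) := by
      calc c * (P * ((r:ℝ) - ((m:ℝ)+3))) * (r:ℝ)^(m+3)
          = c * (P1 * ((r:ℝ)-1)) * (r:ℝ)^(m+3) := by
            linear_combination (-(c * (r:ℝ)^(m+3))) * key
        _ = c * P1 * ((r:ℝ)-1) * (r:ℝ)^(m+3) := by ring
        _ < c * P * ((r:ℝ)-1)^(m+3) * ((r:ℝ)-1) := h3
        _ = c * P * ((r:ℝ)-1)^(m+4) := by rw [pow_succ]; ring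
    have h5 : (c*P) * (((r:ℝ) - ((m:ℝ)+3)) * (r:ℝ)^(m+3)) < (c*P) * ((r:ℝ)-1)^(m+4) := by
      calc (c*P) * (((r:ℝ) - ((m:ℝ)+3)) * (r:ℝ)^(m+3))
          = c * (P * ((r:ℝ) - ((m:ℝ)+3))) * (r:ℝ)^(m+3) := by ring
        _ < c * P * ((r:ℝ)-1)^(m+4) := h4
        _ = (c*P) * ((r:ℝ)-1)^(m+4) := by ring
    exact lt_of_mul_lt_mul_left (by exact h5) (le_of_lt (by positivity))
  · intro h
    have h5 : (c*P) * (((r:ℝ) - ((m:ℝ)+3)) * (r:ℝ)^(m+3)) < (c*P) * ((r:ℝ)-1)^(m+4) :=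
      mul_lt_mul_of_pos_left h (by positivity)
    have h6 : c * P1 * (r:ℝ)^(m+3) * ((r:ℝ)-1) < c * P * ((r:ℝ)-1)^(m+3) * ((r:ℝ)-1) := by
      calc c * P1 * (r:ℝ)^(m+3) * ((r:ℝ)-1)
          = (c*P) * (((r:ℝ) - ((m:ℝ)+3)) * (r:ℝ)^(m+3)) := by
            linear_combination (c * (r:ℝ)^(m+3)) * key
        _ < (c*P) * ((r:ℝ)-1)^(m+4) := h5
        _ = c * P * ((r:ℝ)-1)^(m+3) * ((r:ℝ)-1) := by rw [pow_succ]; ring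
    exact lt_of_mul_lt_mul_right h6 (le_of_lt hr1)

lemma Bcomp' (m r : ℕ) (hr : m + 4 ≤ r) :
    (Bfun (m+4) r < Bfun (m+4) (r-1) ↔
      ((r:ℝ)-1)^(m+4) < ((r:ℝ) - ((m:ℝ)+3)) * (r:ℝ)^(m+3)) := by
  have hR : ((m:ℝ) + 4) ≤ (r:ℝ) := by exact_mod_cast hr
  have hm : (0:ℝ) ≤ (m:ℝ) := Nat.cast_nonneg m
  have hcast : ((r - 1 : ℕ) : ℝ) = (r:ℝ) - 1 := by
    have : 1 ≤ r := by omega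
    push_cast [this]; ring
  have h1 : Bfun (m+4) (r-1)
      = ((m+4).choose 2 : ℝ) * (∏ i ∈ Finset.Icc 1 (m+2), (((r:ℝ)-1) - (i:ℝ))) / ((r:ℝ)-1) ^ (m+3) := by
    simp only [Bfun, hcast]
    rfl
  have h2 : Bfun (m+4) r
      = ((m+4).choose 2 : ℝ) * (∏ i ∈ Finset.Icc 1 (m+2), ((r:ℝ) - (i:ℝ))) / (r:ℝ) ^ (m+3) := by
    simp only [Bfun]
    rfl
  set c : ℝ := ((m+4).choose 2 : ℝ) with hc'
  have hc : 0 < c := by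
    rw [hc']
    exact_mod_cast Nat.choose_pos (by omega : 2 ≤ m + 4)
  set P : ℝ := ∏ i ∈ Finset.Icc 1 (m+2), ((r:ℝ) - (i:ℝ)) with hP'
  have hP : 0 < P := by
    rw [hP']
    apply prodpos
    push_cast
    linarith
  set P1 : ℝ := ∏ i ∈ Finset.Icc 1 (m+2), (((r:ℝ)-1) - (i:ℝ)) with hP1'
  have key : P1 * ((r:ℝ) - 1) = P * ((r:ℝ) - ((m:ℝ)+3)) := by
    rw [hP1', hP']
    have := prodshift (m+2) (r:ℝ)
    push_cast at this ⊢
    linarith [this]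
  have hr1 : (0:ℝ) < (r:ℝ) - 1 := by linarith
  have hrpos : (0:ℝ) < (r:ℝ) := by linarith
  rw [h1, h2]
  rw [div_lt_div_iff₀ (by positivity) (by positivity)]
  constructor
  · intro h
    have h3 : c * P * ((r:ℝ)-1)^(m+3) * ((r:ℝ)-1) < c * P1 * (r:ℝ)^(m+3) * ((r:ℝ)-1) :=
      mul_lt_mul_of_pos_right h hr1
    have h4 : (c*P) * ((r:ℝ)-1)^(m+4) < (c*P) * (((r:ℝ) - ((m:ℝ)+3)) * (r:ℝ)^(m+3)) := by
      calc (c*P) * ((r:ℝ)-1)^(m+4)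
          = c * P * ((r:ℝ)-1)^(m+3) * ((r:ℝ)-1) := by rw [pow_succ]; ring
        _ < c * P1 * (r:ℝ)^(m+3) * ((r:ℝ)-1) := h3
        _ = (c*P) * (((r:ℝ) - ((m:ℝ)+3)) * (r:ℝ)^(m+3)) := by
            linear_combination (c * (r:ℝ)^(m+3)) * key
    exact lt_of_mul_lt_mul_left (by exact h4) (le_of_lt (by positivity))
  · intro h
    have h5 : (c*P) * ((r:ℝ)-1)^(m+4) < (c*P) * (((r:ℝ) - ((m:ℝ)+3)) * (r:ℝ)^(m+3)) :=
      mul_lt_mul_of_pos_left h (by positivity)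
    have h6 : c * P * ((r:ℝ)-1)^(m+3) * ((r:ℝ)-1) < c * P1 * (r:ℝ)^(m+3) * ((r:ℝ)-1) := by
      calc c * P * ((r:ℝ)-1)^(m+3) * ((r:ℝ)-1)
          = (c*P) * ((r:ℝ)-1)^(m+4) := by rw [pow_succ]; ring
        _ < (c*P) * (((r:ℝ) - ((m:ℝ)+3)) * (r:ℝ)^(m+3)) := h5
        _ = c * P1 * (r:ℝ)^(m+3) * ((r:ℝ)-1) := by
            linear_combination (-(c * (r:ℝ)^(m+3))) * key
    exact lt_of_mul_lt_mul_right h6 (le_of_lt hr1)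

/-- For `t ≥ 4` and `f = ⌈(t−2)(3t+1)/6⌉`: `B_{r−1} < B_r` for `t−1 ≤ r ≤ f`,
`B_{r−1} > B_r` for `r ≥ f+1`; in particular `B_f = max{B_r : r ≥ t−2}`. -/
theorem stmt9 (t : ℕ) (ht : 4 ≤ t) (f : ℕ)
    (hf : f = ⌈(((t : ℚ) - 2) * (3 * (t : ℚ) + 1)) / 6⌉₊) :
    (∀ r : ℕ, t - 1 ≤ r → r ≤ f → Bfun t (r - 1) < Bfun t r) ∧
    (∀ r : ℕ, f + 1 ≤ r → Bfun t r < Bfun t (r - 1)) ∧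
    (∀ r : ℕ, t - 2 ≤ r → Bfun t r ≤ Bfun t f) := by
  obtain ⟨m, rfl⟩ : ∃ m, t = m + 4 := ⟨t - 4, by omega⟩
  -- basic facts about f
  have hq : ((((m:ℕ)+4 : ℕ) : ℚ) - 2) * (3 * (((m:ℕ)+4 : ℕ) : ℚ) + 1) / 6
      = ((m:ℚ)+2) * (3*(m:ℚ)+13) / 6 := by push_cast; ring
  rw [hq] at hf
  have hq0 : (0:ℚ) ≤ ((m:ℚ)+2) * (3*(m:ℚ)+13) / 6 := by positivity
  have hle : ((m:ℚ)+2) * (3*(m:ℚ)+13) / 6 ≤ (f:ℚ) := hf ▸ Nat.le_ceil _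
  have hlt : (f:ℚ) < ((m:ℚ)+2) * (3*(m:ℚ)+13) / 6 + 1 := hf ▸ Nat.ceil_lt_add_one hq0
  have hfl : (3*m^2+19*m+26 : ℕ) ≤ 6*f := by
    have h6 : (3*(m:ℚ)^2+19*(m:ℚ)+26) ≤ 6*(f:ℚ) := by nlinarith [hle]
    exact_mod_cast h6
  have hfu : 6*f ≤ (3*m^2+19*m+31 : ℕ) := by
    have h6 : 6*(f:ℚ) < (3*(m:ℚ)^2+19*(m:ℚ)+32) := by nlinarith [hlt]
    have : 6*f < 3*m^2+19*m+32 := by exact_mod_cast h6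
    omega
  have hfm : m + 4 ≤ f := by
    have h1 : 6*(m+4) < 3*m^2+19*m+26 := by nlinarith
    omega
  -- Part 1
  have P1 : ∀ r : ℕ, m + 3 ≤ r → r ≤ f → Bfun (m+4) (r-1) < Bfun (m+4) r := by
    intro r h1 h2
    rcases eq_or_lt_of_le h1 with heq | hlt'
    · -- r = m+3
      subst heq
      have hz : Bfun (m+4) (m+3-1) = 0 := by
        have hmem : (m+2) ∈ Finset.Icc 1 (m+2) := Finset.mem_Icc.mpr ⟨by omega, le_refl _⟩
        have : (∏ i ∈ Finset.Icc 1 ((m+4) - 2), ((((m+3-1 : ℕ)):ℝ) - (i:ℝ))) = 0 := by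
          apply Finset.prod_eq_zero hmem
          push_cast
          ring
        simp only [Bfun]
        rw [this]
        simp
      rw [hz]
      have hP : 0 < ∏ i ∈ Finset.Icc 1 ((m+4) - 2), ((((m+3:ℕ)):ℝ) - (i:ℝ)) := by
        have := prodpos (m+2) ((m+3:ℕ):ℝ) (by push_cast; linarith)
        convert this using 2
        rfl
      have hc : (0:ℝ) < ((m+4).choose 2 : ℝ) := by
        exact_mod_cast Nat.choose_pos (by omega : 2 ≤ m+4)
      have hpow : (0:ℝ) < (((m+3:ℕ)):ℝ) ^ ((m+4)-1) := by positivity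
      exact div_pos (mul_pos hc hP) hpow
    · have hr4 : m + 4 ≤ r := hlt'
      apply (Bcomp m r hr4).mpr
      apply realINC m r (by exact_mod_cast hr4)
      have : 6*r ≤ 3*m^2+19*m+31 := le_trans (by omega) hfu
      exact_mod_cast this
  -- Part 2
  have P2 : ∀ r : ℕ, f + 1 ≤ r → Bfun (m+4) r < Bfun (m+4) (r-1) := by
    intro r h
    have hr4 : m + 4 ≤ r := by omega
    apply (Bcomp' m r hr4).mpr
    apply realDEC m r
    have : 3*m^2+19*m+32 ≤ 6*r := by omega
    exact_mod_cast this
  refine ⟨by intro r h1 h2; exact P1 r (by omega) h2, P2, ?_⟩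
  -- Part 3
  have up : ∀ d r : ℕ, r + d = f → m + 2 ≤ r → Bfun (m+4) r ≤ Bfun (m+4) f := by
    intro d
    induction d with
    | zero => intro r h _; rw [show r = f by omega]
    | succ d ih =>
      intro r h hm2
      have h1 : Bfun (m+4) r < Bfun (m+4) (r+1) := by
        have := P1 (r+1) (by omega) (by omega)
        simpa using this
      exact le_trans (le_of_lt h1) (ih (r+1) (by omega) (by omega))
  have down : ∀ r : ℕ, f ≤ r → Bfun (m+4) r ≤ Bfun (m+4) f := by
    intro r hr
    induction r, hr using Nat.le_induction with
    | base => rfl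
    | succ r hr ih =>
      have h1 : Bfun (m+4) (r+1) < Bfun (m+4) r := by
        have := P2 (r+1) (by omega)
        simpa using this
      exact le_trans (le_of_lt h1) ih
  intro r hr
  rcases le_or_gt r f with h | h
  · exact up (f - r) r (by omega) (by omega)
  · exact down r (le_of_lt h)
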